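/- The characteristic polynomial factors as p(y) = (y − 1)·q(y), where q(y) = y^{m−1} − ∑_{k=1}^{m−1} (F̄(k)/f(0))·y^{m−1−k} and F̄(k) = ∑_{j=k+1}^{m} f(j). -/

import Mathlib

open Polynomial

theorem stmt_8 (m : ℕ) (hm : 2 ≤ m) (f : ℕ → ℝ)
    (hfnonneg : ∀ k, 0 ≤ f k) (hfsum : ∑ k ∈ Finset.range (m + 1), f k = 1)
    (hf0 : 0 < f 0)
    (α : ℕ → ℝ)
    (hα0 : α 0 = (1 - f 1) / f 0)
    (hαk : ∀ k, 1 ≤ k → k ≤ m - 1 → α k = -(f (k + 1)) / f 0)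
    (p : Polynomial ℝ)
    (hp : p = X ^ m - ∑ k ∈ Finset.range m, C (α k) * X ^ (m - 1 - k))
    (Fbar : ℕ → ℝ)
    (hFbar : ∀ k, Fbar k = ∑ j ∈ Finset.Icc (k + 1) m, f j)
    (q : Polynomial ℝ)
    (hq : q = X ^ (m - 1) -
        ∑ k ∈ Finset.Icc 1 (m - 1), C (Fbar k / f 0) * X ^ (m - 1 - k)) :
    p = (X - 1) * q := by
  obtain ⟨t, rfl⟩ : ∃ t, m = t + 2 := ⟨m - 2, by omega⟩
  have hf0' : f 0 ≠ 0 := ne_of_gt hf0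
  -- Fbar recurrence
  have hFrec : ∀ i ≤ t, Fbar (i + 1) = f (i + 2) + Fbar (i + 2) := by
    intro i hi
    rw [hFbar, hFbar, ← Finset.Ico_add_one_right_eq_Icc, ← Finset.Ico_add_one_right_eq_Icc,
      Finset.sum_Ico_eq_sum_range, Finset.sum_Ico_eq_sum_range,
      show t + 2 + 1 - (i + 1 + 1) = (t - i) + 1 from by omega,
      show t + 2 + 1 - (i + 2 + 1) = t - i from by omega,
      Finset.sum_range_succ']
    have h2 : f (i + 1 + 1 + 0) = f (i + 2) := by norm_num
    rw [h2, add_comm]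
    exact congrArg (f (i + 2) + ·)
      (Finset.sum_congr rfl fun j _ => by
        rw [show i + 1 + 1 + (j + 1) = i + 2 + 1 + j from by omega])
  have hFbar1 : Fbar 1 = 1 - f 0 - f 1 := by
    rw [Finset.sum_range_succ', Finset.sum_range_succ'] at hfsum
    rw [hFbar, ← Finset.Ico_add_one_right_eq_Icc, Finset.sum_Ico_eq_sum_range,
      show t + 2 + 1 - (1 + 1) = t + 1 from by omega]
    have : ∑ j ∈ Finset.range (t + 1), f (1 + 1 + j)
        = ∑ j ∈ Finset.range (t + 1), f (j + 1 + 1) := by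
      apply Finset.sum_congr rfl; intro j _; congr 1; omega
    rw [this]
    linarith
  have hFtop : Fbar (t + 2) = 0 := by
    rw [hFbar, Finset.Icc_eq_empty (by omega), Finset.sum_empty]
  -- scalar relations
  have hαβ : ∀ i ≤ t, α (i + 1) = Fbar (i + 2) / f 0 - Fbar (i + 1) / f 0 := by
    intro i hi
    rw [hαk (i + 1) (by omega) (by omega), hFrec i hi]
    field_simp
    ring
  have hα0' : α 0 = Fbar 1 / f 0 + 1 := by
    rw [hα0, hFbar1]
    field_simp
    ring
  subst hp hq
  -- rewrite p's sum
  have e1 : ∑ k ∈ Finset.range (t + 2), C (α k) * X ^ (t + 2 - 1 - k)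
      = ∑ i ∈ Finset.range (t + 1), C (α (i + 1)) * X ^ (t - i)
        + C (α 0) * X ^ (t + 1) := by
    rw [Finset.sum_range_succ']
    congr 1
    · apply Finset.sum_congr rfl; intro i _; congr 2; omega
  -- rewrite q's sum
  have e2 : ∑ k ∈ Finset.Icc 1 (t + 2 - 1), C (Fbar k / f 0) * X ^ (t + 2 - 1 - k)
      = ∑ i ∈ Finset.range (t + 1), C (Fbar (i + 1) / f 0) * X ^ (t - i) := by
    rw [← Finset.Ico_add_one_right_eq_Icc, Finset.sum_Ico_eq_sum_range]
    apply Finset.sum_congr rfl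
    intro i hi
    rw [Finset.mem_range] at hi
    rw [show 1 + i = i + 1 from by omega, show t + 2 - 1 - (i + 1) = t - i from by omega]
  have hXS : X * ∑ i ∈ Finset.range (t + 1), C (Fbar (i + 1) / f 0) * X ^ (t - i)
      = ∑ i ∈ Finset.range (t + 1), C (Fbar (i + 1) / f 0) * X ^ (t + 1 - i) := by
    rw [Finset.mul_sum]
    apply Finset.sum_congr rfl
    intro i hi
    rw [Finset.mem_range] at hi
    rw [show t + 1 - i = (t - i) + 1 from by omega, pow_succ]
    ring
  have hXS2 : ∑ i ∈ Finset.range (t + 1), C (Fbar (i + 1) / f 0) * X ^ (t + 1 - i)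
      = ∑ i ∈ Finset.range (t + 1), C (Fbar (i + 2) / f 0) * X ^ (t - i)
        + C (Fbar 1 / f 0) * X ^ (t + 1) := by
    rw [Finset.sum_range_succ']
    rw [Finset.sum_range_succ (fun i => C (Fbar (i + 2) / f 0) * X ^ (t - i)) t]
    rw [hFtop]
    congr 1
    · rw [show (0:ℝ) / f 0 = 0 from by simp, map_zero, zero_mul, add_zero]
      apply Finset.sum_congr rfl; intro i _; congr 2; omega
  have e3 : ∑ i ∈ Finset.range (t + 1), C (α (i + 1)) * X ^ (t - i)
      = ∑ i ∈ Finset.range (t + 1), C (Fbar (i + 2) / f 0) * X ^ (t - i)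
        - ∑ i ∈ Finset.range (t + 1), C (Fbar (i + 1) / f 0) * X ^ (t - i) := by
    rw [← Finset.sum_sub_distrib]
    apply Finset.sum_congr rfl
    intro i hi
    rw [Finset.mem_range] at hi
    rw [hαβ i (by omega), map_sub]
    ring
  rw [show t + 2 - 1 = t + 1 from rfl] at *
  rw [e1, e2, e3, hα0', map_add, map_one]
  linear_combination hXS.trans hXS2
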